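/- Let α > 0 and let h : ℝ → ℝ satisfy: (i) h(x+1) = h(x) for all x ∈ ℝ; (ii) h(x) = −h(1−x) for all x ∈ [0,1]; (iii) h(z) = z^α · h(2 − 1/z) for all z ∈ [1/2, 1]. Then h(x) = (−x)^α · h(2 − 1/x) for all x < 0, and h(0) = 0. -/

import Mathlib

/-- Under the hypotheses on the periodically extended `h`, the equation
`h(x) = (-x)^α h(2 - 1/x)` holds for all `x < 0`, and `h(0) = 0`. -/
theorem stmt14 (α : ℝ) (hα : 0 < α) (h : ℝ → ℝ)
    (hper : ∀ x : ℝ, h (x + 1) = h x)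
    (hanti : ∀ x : ℝ, 0 ≤ x → x ≤ 1 → h x = -h (1 - x))
    (hfe : ∀ z : ℝ, 1 / 2 ≤ z → z ≤ 1 → h z = z ^ α * h (2 - 1 / z)) :
    (∀ x : ℝ, x < 0 → h x = (-x) ^ α * h (2 - 1 / x)) ∧ h 0 = 0 := by
  -- integer periodicity
  have hint : ∀ (n : ℤ) (x : ℝ), h (x + n) = h x := by
    intro n
    induction n using Int.induction_on with
    | zero => intro x; norm_num
    | succ k ih =>
      intro x
      have h1 := hper (x + k)
      have h2 := ih x
      push_cast at *
      rw [show x + ((k : ℝ) + 1) = x + k + 1 by ring, h1, h2]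
    | pred k ih =>
      intro x
      have h1 := hper (x + (-(k : ℝ) - 1))
      have h2 := ih x
      push_cast at *
      rw [show x + (-(k : ℝ) - 1) + 1 = x + -(k : ℝ) by ring] at h1
      rw [← h1]; exact h2
  have h0 : h 0 = 0 := by
    have h1 : h 1 = h 0 := by simpa using hper 0
    have h2 := hanti 0 le_rfl zero_le_one
    simp at h2
    linarith
  -- h is odd
  have hodd : ∀ x : ℝ, h (-x) = -h x := by
    intro x
    set f := Int.fract x with hf
    have hf0 : 0 ≤ f := Int.fract_nonneg x
    have hf1 : f ≤ 1 := (Int.fract_lt_one x).le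
    have hx : h x = h f := by
      have := hint ⌊x⌋ f
      rw [show f + (⌊x⌋ : ℝ) = x by rw [hf, Int.fract]; ring] at this
      exact this
    have hnx : h (-x) = h (1 - f) := by
      have := hint (-⌊x⌋ - 1) (1 - f)
      rw [show (1 - f) + ((-⌊x⌋ - 1 : ℤ) : ℝ) = -x by
        push_cast; rw [hf, Int.fract]; ring] at this
      exact this
    rw [hnx, hx, hanti f hf0 hf1, neg_neg]
  -- the reduction relation
  have R : ∀ s : ℝ, 0 ≤ s → s ≤ 1 → h s = (1 + s) ^ α * h (s / (1 + s)) := by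
    intro s hs0 hs1
    have h1s : (0 : ℝ) < 1 + s := by linarith
    have hz := hfe (1 / (1 + s)) (by rw [div_le_div_iff₀ (by norm_num) h1s]; linarith)
      (by rw [div_le_one h1s]; linarith)
    rw [one_div_one_div] at hz
    have e1 : (2 : ℝ) - (1 + s) = 1 - s := by ring
    rw [e1] at hz
    have e2 : h (1 - s) = -h s := by
      have := hanti s hs0 hs1
      linarith
    have e3 : h (1 / (1 + s)) = -h (s / (1 + s)) := by
      have e4 : (1 : ℝ) / (1 + s) = -(s / (1 + s)) + 1 := by
        field_simp; ring
      rw [e4, hper, hodd]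
    rw [e2, e3] at hz
    have e5 : (1 / (1 + s)) ^ α = ((1 + s) ^ α)⁻¹ := by
      rw [one_div, Real.inv_rpow h1s.le]
    rw [e5] at hz
    have hpow : (0 : ℝ) < (1 + s) ^ α := Real.rpow_pos_of_pos h1s α
    field_simp at hz ⊢
    linarith
  -- the key functional equation on (0, 1]
  have C : ∀ n : ℕ, ∀ s : ℝ, 0 < s → s ≤ 1 → 1 / s ≤ n → h s = -(s ^ α) * h (1 / s) := by
    intro n
    induction n with
    | zero =>
      intro s hs _ hn
      exfalso
      have := one_div_pos.mpr hs
      simp at hn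
      linarith
    | succ n ih =>
      intro s hs hs1 hn
      by_cases hcase : 1 / 2 ≤ s
      · -- base case
        have hz := hfe s hcase hs1
        have e1 : (2 : ℝ) - 1 / s = -(1 / s) + ((2 : ℤ) : ℝ) := by push_cast; ring
        rw [e1, hint, hodd] at hz
        rw [hz]; ring
      · -- inductive step
        push_neg at hcase
        set t := s / (1 - s) with ht
        have h1s : (0 : ℝ) < 1 - s := by linarith
        have htpos : 0 < t := div_pos hs h1s
        have ht1 : t ≤ 1 := by rw [ht, div_le_one h1s]; linarith
        have hinv : 1 / t = 1 / s - 1 := by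
          rw [ht]; field_simp
        have htn : 1 / t ≤ n := by
          rw [hinv]
          have : (1 : ℝ) / s ≤ (n : ℝ) + 1 := by exact_mod_cast hn
          linarith
        have iht := ih t htpos ht1 htn
        have hR := R t htpos.le ht1
        have hts : t / (1 + t) = s := by
          rw [ht]; field_simp; ring
        rw [hts] at hR
        have h1t' : (1 : ℝ) / t = 1 / s + ((-1 : ℤ) : ℝ) := by
          rw [hinv]; push_cast; ring
        rw [h1t', hint] at iht
        -- hR : h t = (1+t)^α * h s, iht : h t = -(t^α) * h (1/s)
        have hst : t ^ α = s ^ α * (1 + t) ^ α := by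
          rw [← Real.mul_rpow hs.le (by linarith : (0:ℝ) ≤ 1 + t)]
          congr 1
          rw [ht]; field_simp; ring
        have hpow : (0 : ℝ) < (1 + t) ^ α := Real.rpow_pos_of_pos (by linarith) α
        have key : (1 + t) ^ α * h s = (1 + t) ^ α * (-(s ^ α) * h (1 / s)) := by
          rw [← hR, iht, hst]; ring
        exact mul_left_cancel₀ (ne_of_gt hpow) key
  -- P(t) for all t > 0
  have P : ∀ t : ℝ, 0 < t → h t = -(t ^ α) * h (1 / t) := by
    intro t ht
    by_cases h1 : t ≤ 1
    · exact C ⌈1 / t⌉₊ t ht h1 (Nat.le_ceil _)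
    · push_neg at h1
      have hu : (0 : ℝ) < 1 / t := by positivity
      have hu1 : 1 / t ≤ 1 := by rw [div_le_one (by linarith)]; linarith
      have := C ⌈t⌉₊ (1 / t) hu hu1 (by rw [one_div_one_div]; exact Nat.le_ceil _)
      rw [one_div_one_div] at this
      have hmul : t ^ α * (1 / t) ^ α = 1 := by
        rw [← Real.mul_rpow (by linarith) hu.le, mul_one_div_cancel (by linarith : t ≠ 0),
          Real.one_rpow]
      rw [this]
      linear_combination -h t * hmul
  refine ⟨?_, h0⟩
  intro x hx
  have ht : (0 : ℝ) < -x := by linarith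
  have e1 : (2 : ℝ) - 1 / x = 1 / (-x) + ((2 : ℤ) : ℝ) := by
    push_cast
    field_simp [hx.ne]
    ring
  rw [e1, hint]
  have e2 : h x = -h (-x) := by rw [hodd]; ring
  rw [e2, P (-x) ht]
  ring
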